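/- Let T ∈ (0, ∞] and let A : [0,T) → ℝ be continuous with A(t) ≥ −e^t for all t. Let d, ρ, b, a : [0,T) → ℝ be differentiable and satisfy d' = −d²/2 + A(t)ρ² − ρ + 1, ρ' = −ρ d, b' = −b²/2 − e^t a² − a + 1, and a' = −b a on [0,T). If b(0) < d(0) and 0 < ρ(0) < a(0), then for all t ∈ [0,T): b(t) < d(t) and 0 < ρ(t) < a(t). -/

import Mathlib

open Set Filter

/-- A continuous-on-`[0,T)` function has a primitive with full derivatives on `[0,T)`. -/
theorem exists_primitive_aux (T : EReal) (hT : 0 < T) (f : ℝ → ℝ)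
    (hf : ∀ t : ℝ, 0 ≤ t → (t : EReal) < T → ContinuousAt f t) :
    ∃ F : ℝ → ℝ, F 0 = 0 ∧ ∀ t : ℝ, 0 ≤ t → (t : EReal) < T → HasDerivAt F (f t) t := by
  set g : ℝ → ℝ := fun t => f (max t 0) with hg
  set V : Set ℝ := {t : ℝ | (t : EReal) < T} with hV
  have hVopen : IsOpen V := isOpen_Iio.preimage continuous_coe_real_ereal
  have hgV : ∀ t ∈ V, ContinuousAt g t := by
    intro t ht
    have h1 : ContinuousAt f (max t 0) := by
      refine hf _ (le_max_right _ _) ?_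
      rcases le_or_gt t 0 with h | h
      · simpa [max_eq_right h] using hT
      · simpa [hV, max_eq_left h.le] using ht
    have h2 : ContinuousAt (fun s : ℝ => max s 0) t :=
      (continuous_id.max continuous_const).continuousAt
    exact ContinuousAt.comp (g := f) (f := fun s : ℝ => max s 0) h1 h2
  have hgC : ContinuousOn g V := fun t ht => (hgV t ht).continuousWithinAt
  refine ⟨fun t => ∫ s in (0:ℝ)..t, g s, intervalIntegral.integral_same, ?_⟩
  intro t ht0 htT
  have htV : t ∈ V := htT
  have hsub : Set.uIcc 0 t ⊆ V := by
    rw [Set.uIcc_of_le ht0]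
    intro s hs
    exact lt_of_le_of_lt (EReal.coe_le_coe_iff.2 hs.2) htT
  have hint : IntervalIntegrable g MeasureTheory.volume 0 t :=
    (hgC.mono hsub).intervalIntegrable
  have hmeas : StronglyMeasurableAtFilter g (nhds t) :=
    hgC.stronglyMeasurableAtFilter hVopen t htV
  have := intervalIntegral.integral_hasDerivAt_right hint hmeas (hgV t htV)
  simpa [hg, max_eq_left ht0] using this

/-- Comparison principle between the Euler--Poisson characteristic system and the
auxiliary system with coefficient `−e^t` (exponential case). -/
theorem comparison_principle_exp
    (T : EReal) (hT : 0 < T)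
    (A d ρ b a : ℝ → ℝ)
    (hAcont : ContinuousOn A {t : ℝ | 0 ≤ t ∧ (t : EReal) < T})
    (hAlb : ∀ t : ℝ, 0 ≤ t → (t : EReal) < T → -Real.exp t ≤ A t)
    (hd : ∀ t : ℝ, 0 ≤ t → (t : EReal) < T →
      HasDerivAt d (-(d t) ^ 2 / 2 + A t * (ρ t) ^ 2 - ρ t + 1) t)
    (hρ : ∀ t : ℝ, 0 ≤ t → (t : EReal) < T →
      HasDerivAt ρ (-(ρ t) * d t) t)
    (hb : ∀ t : ℝ, 0 ≤ t → (t : EReal) < T →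
      HasDerivAt b (-(b t) ^ 2 / 2 - Real.exp t * (a t) ^ 2 - a t + 1) t)
    (ha : ∀ t : ℝ, 0 ≤ t → (t : EReal) < T →
      HasDerivAt a (-(b t) * a t) t)
    (hbd0 : b 0 < d 0) (hρ0 : 0 < ρ 0) (hρa0 : ρ 0 < a 0) :
    ∀ t : ℝ, 0 ≤ t → (t : EReal) < T →
      b t < d t ∧ 0 < ρ t ∧ ρ t < a t := by
  -- membership helper
  have hIccU : ∀ u : ℝ, (u : EReal) < T → ∀ s ∈ Icc (0:ℝ) u, 0 ≤ s ∧ (s : EReal) < T :=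
    fun u huT s hs => ⟨hs.1, lt_of_le_of_lt (EReal.coe_le_coe_iff.2 hs.2) huT⟩
  -- continuity of coefficients at points of [0,T)
  have hdc : ∀ t : ℝ, 0 ≤ t → (t : EReal) < T → ContinuousAt d t :=
    fun t h1 h2 => (hd t h1 h2).continuousAt
  have hbc : ∀ t : ℝ, 0 ≤ t → (t : EReal) < T → ContinuousAt b t :=
    fun t h1 h2 => (hb t h1 h2).continuousAt
  -- primitives
  obtain ⟨Dd, hDd0, hDd⟩ := exists_primitive_aux T hT d hdc
  obtain ⟨Bb, hBb0, hBb⟩ := exists_primitive_aux T hT b hbc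
  obtain ⟨Bm, hBm0, hBm⟩ := exists_primitive_aux T hT (fun t => (b t + d t) / 2)
    (fun t h1 h2 => ((hbc t h1 h2).add (hdc t h1 h2)).div_const 2)
  -- positivity of ρ
  have hρpos : ∀ t : ℝ, 0 ≤ t → (t : EReal) < T → 0 < ρ t := by
    intro u hu0 huT
    have hconst := constant_of_has_deriv_right_zero
      (f := fun t => ρ t * Real.exp (Dd t)) (a := 0) (b := u)
      (fun s hs => by
        obtain ⟨hs1, hs2⟩ := hIccU u huT s hs
        exact (((hρ s hs1 hs2).mul ((hDd s hs1 hs2).exp)).continuousAt).continuousWithinAt)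
      (fun x hx => by
        obtain ⟨hx1, hx2⟩ := hIccU u huT x ⟨hx.1, hx.2.le⟩
        have h := (hρ x hx1 hx2).mul ((hDd x hx1 hx2).exp)
        have h0 : -ρ x * d x * Real.exp (Dd x) + ρ x * (Real.exp (Dd x) * d x) = 0 := by ring
        rw [h0] at h
        exact h.hasDerivWithinAt)
    have hu := hconst u ⟨hu0, le_refl u⟩
    simp only [hDd0, Real.exp_zero, mul_one] at hu
    nlinarith [Real.exp_pos (Dd u)]
  -- positivity of a
  have hapos : ∀ t : ℝ, 0 ≤ t → (t : EReal) < T → 0 < a t := by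
    intro u hu0 huT
    have hconst := constant_of_has_deriv_right_zero
      (f := fun t => a t * Real.exp (Bb t)) (a := 0) (b := u)
      (fun s hs => by
        obtain ⟨hs1, hs2⟩ := hIccU u huT s hs
        exact (((ha s hs1 hs2).mul ((hBb s hs1 hs2).exp)).continuousAt).continuousWithinAt)
      (fun x hx => by
        obtain ⟨hx1, hx2⟩ := hIccU u huT x ⟨hx.1, hx.2.le⟩
        have h := (ha x hx1 hx2).mul ((hBb x hx1 hx2).exp)
        have h0 : -b x * a x * Real.exp (Bb x) + a x * (Real.exp (Bb x) * b x) = 0 := by ring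
        rw [h0] at h
        exact h.hasDerivWithinAt)
    have hu := hconst u ⟨hu0, le_refl u⟩
    simp only [hBb0, Real.exp_zero, mul_one] at hu
    nlinarith [Real.exp_pos (Bb u), hρ0, hρa0]
  -- key claim
  have key : ∀ u : ℝ, 0 ≤ u → (u : EReal) < T →
      (∀ s ∈ Icc (0:ℝ) u, b s - d s ≤ 0 ∧ ρ s - a s ≤ 0) →
      b u - d u < 0 ∧ ρ u - a u < 0 := by
    intro u hu0 huT hle
    constructor
    · -- E-part via integrating factor exp(Bm)
      have hmono : AntitoneOn (fun t => (b t - d t) * Real.exp (Bm t)) (Icc 0 u) := by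
        apply antitoneOn_of_deriv_nonpos (convex_Icc 0 u)
        · intro s hs
          obtain ⟨hs1, hs2⟩ := hIccU u huT s hs
          exact ((((hb s hs1 hs2).sub (hd s hs1 hs2)).mul
            ((hBm s hs1 hs2).exp)).continuousAt).continuousWithinAt
        · intro x hx
          rw [interior_Icc] at hx
          obtain ⟨hx1, hx2⟩ := hIccU u huT x ⟨hx.1.le, hx.2.le⟩
          exact (((hb x hx1 hx2).sub (hd x hx1 hx2)).mul
            ((hBm x hx1 hx2).exp)).differentiableAt.differentiableWithinAt
        · intro x hx
          rw [interior_Icc] at hx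
          obtain ⟨hx1, hx2⟩ := hIccU u huT x ⟨hx.1.le, hx.2.le⟩
          have hder : HasDerivAt (fun t => (b t - d t) * Real.exp (Bm t))
              ((-(b x) ^ 2 / 2 - Real.exp x * (a x) ^ 2 - a x + 1 -
              (-(d x) ^ 2 / 2 + A x * (ρ x) ^ 2 - ρ x + 1)) * Real.exp (Bm x) +
              (b x - d x) * (Real.exp (Bm x) * ((b x + d x) / 2))) x :=
            ((hb x hx1 hx2).sub (hd x hx1 hx2)).mul ((hBm x hx1 hx2).exp)
          rw [hder.deriv]
          have hA := hAlb x hx1 hx2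
          have hF := (hle x ⟨hx.1.le, hx.2.le⟩).2
          have hρp := hρpos x hx1 hx2
          have hinner : -Real.exp x * (a x) ^ 2 - A x * (ρ x) ^ 2 - a x + ρ x ≤ 0 := by
            have h1 : 0 ≤ a x - ρ x := by linarith
            have h2 : 0 ≤ (A x + Real.exp x) * (ρ x) ^ 2 :=
              mul_nonneg (by linarith) (sq_nonneg _)
            nlinarith [mul_nonneg (mul_nonneg (Real.exp_pos x).le h1) (by linarith : (0:ℝ) ≤ a x + ρ x)]
          have heq : (-(b x) ^ 2 / 2 - Real.exp x * (a x) ^ 2 - a x + 1 -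
              (-(d x) ^ 2 / 2 + A x * (ρ x) ^ 2 - ρ x + 1)) * Real.exp (Bm x) +
              (b x - d x) * (Real.exp (Bm x) * ((b x + d x) / 2)) =
              (-Real.exp x * (a x) ^ 2 - A x * (ρ x) ^ 2 - a x + ρ x) * Real.exp (Bm x) := by
            ring
          rw [heq]
          exact mul_nonpos_iff.2 (Or.inr ⟨hinner, (Real.exp_pos _).le⟩)
      have h := hmono (left_mem_Icc.2 hu0) (right_mem_Icc.2 hu0) hu0
      simp only [hBm0, Real.exp_zero, mul_one] at h
      nlinarith [Real.exp_pos (Bm u), hbd0]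
    · -- F-part via integrating factor exp(Dd)
      have hmono : AntitoneOn (fun t => (ρ t - a t) * Real.exp (Dd t)) (Icc 0 u) := by
        apply antitoneOn_of_deriv_nonpos (convex_Icc 0 u)
        · intro s hs
          obtain ⟨hs1, hs2⟩ := hIccU u huT s hs
          exact ((((hρ s hs1 hs2).sub (ha s hs1 hs2)).mul
            ((hDd s hs1 hs2).exp)).continuousAt).continuousWithinAt
        · intro x hx
          rw [interior_Icc] at hx
          obtain ⟨hx1, hx2⟩ := hIccU u huT x ⟨hx.1.le, hx.2.le⟩
          exact (((hρ x hx1 hx2).sub (ha x hx1 hx2)).mul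
            ((hDd x hx1 hx2).exp)).differentiableAt.differentiableWithinAt
        · intro x hx
          rw [interior_Icc] at hx
          obtain ⟨hx1, hx2⟩ := hIccU u huT x ⟨hx.1.le, hx.2.le⟩
          have hder : HasDerivAt (fun t => (ρ t - a t) * Real.exp (Dd t))
              ((-(ρ x) * d x - -(b x) * a x) * Real.exp (Dd x) +
              (ρ x - a x) * (Real.exp (Dd x) * d x)) x :=
            ((hρ x hx1 hx2).sub (ha x hx1 hx2)).mul ((hDd x hx1 hx2).exp)
          rw [hder.deriv]
          have hE := (hle x ⟨hx.1.le, hx.2.le⟩).1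
          have hap := hapos x hx1 hx2
          have heq : (-(ρ x) * d x - -(b x) * a x) * Real.exp (Dd x) +
              (ρ x - a x) * (Real.exp (Dd x) * d x) =
              (a x * (b x - d x)) * Real.exp (Dd x) := by ring
          rw [heq]
          exact mul_nonpos_iff.2 (Or.inr ⟨mul_nonpos_iff.2 (Or.inl ⟨hap.le, hE⟩),
            (Real.exp_pos _).le⟩)
      have h := hmono (left_mem_Icc.2 hu0) (right_mem_Icc.2 hu0) hu0
      simp only [hDd0, Real.exp_zero, mul_one] at h
      nlinarith [Real.exp_pos (Dd u), hρa0]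
  -- main continuity argument
  intro u hu0 huT
  have main : b u - d u < 0 ∧ ρ u - a u < 0 := by
    by_contra hcon
    set cl : ℝ → ℝ := fun t => min (max t 0) u with hcl
    have hclcont : Continuous cl := (continuous_id.max continuous_const).min continuous_const
    have hclmem : ∀ t : ℝ, 0 ≤ cl t ∧ (cl t : EReal) < T := fun t =>
      ⟨le_min (le_max_right _ _) hu0,
        lt_of_le_of_lt (EReal.coe_le_coe_iff.2 (min_le_right _ _)) huT⟩
    have hcleq : ∀ t ∈ Icc (0:ℝ) u, cl t = t := fun t ht => by
      simp [hcl, max_eq_left ht.1, min_eq_left ht.2]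
    have hEcont : Continuous (fun t => b (cl t) - d (cl t)) := by
      rw [continuous_iff_continuousAt]
      intro t
      have h1 := hclmem t
      have h2 : ContinuousAt (fun s => b s - d s) (cl t) :=
        ((hb _ h1.1 h1.2).continuousAt).sub ((hd _ h1.1 h1.2).continuousAt)
      exact ContinuousAt.comp (g := fun s => b s - d s) (f := cl) h2 hclcont.continuousAt
    have hFcont : Continuous (fun t => ρ (cl t) - a (cl t)) := by
      rw [continuous_iff_continuousAt]
      intro t
      have h1 := hclmem t
      have h2 : ContinuousAt (fun s => ρ s - a s) (cl t) :=
        ((hρ _ h1.1 h1.2).continuousAt).sub ((ha _ h1.1 h1.2).continuousAt)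
      exact ContinuousAt.comp (g := fun s => ρ s - a s) (f := cl) h2 hclcont.continuousAt
    set Z : Set ℝ := Icc 0 u ∩ ((fun t => b (cl t) - d (cl t)) ⁻¹' Ici 0 ∪
      (fun t => ρ (cl t) - a (cl t)) ⁻¹' Ici 0) with hZ
    have hZc : IsClosed Z := isClosed_Icc.inter
      ((isClosed_Ici.preimage hEcont).union (isClosed_Ici.preimage hFcont))
    have huIcc : u ∈ Icc (0:ℝ) u := right_mem_Icc.2 hu0
    have huZ : u ∈ Z := by
      refine ⟨huIcc, ?_⟩
      rcases not_and_or.1 hcon with h | h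
      · exact Or.inl (by simp only [Set.mem_preimage, Set.mem_Ici, hcleq u huIcc]; linarith [not_lt.1 h])
      · exact Or.inr (by simp only [Set.mem_preimage, Set.mem_Ici, hcleq u huIcc]; linarith [not_lt.1 h])
    have hZbdd : BddBelow Z := bddBelow_Icc.mono Set.inter_subset_left
    set t₀ := sInf Z with ht₀def
    have ht₀Z : t₀ ∈ Z := hZc.csInf_mem ⟨u, huZ⟩ hZbdd
    have ht₀Icc : t₀ ∈ Icc (0:ℝ) u := ht₀Z.1
    have ht₀T : (t₀ : EReal) < T := lt_of_le_of_lt (EReal.coe_le_coe_iff.2 ht₀Icc.2) huT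
    have hstrict : ∀ s : ℝ, 0 ≤ s → s < t₀ → b s - d s < 0 ∧ ρ s - a s < 0 := by
      intro s hs0 hst
      by_contra hc
      have hsIcc : s ∈ Icc (0:ℝ) u := ⟨hs0, hst.le.trans ht₀Icc.2⟩
      have hsZ : s ∈ Z := by
        refine ⟨hsIcc, ?_⟩
        rcases not_and_or.1 hc with h | h
        · exact Or.inl (by simp only [Set.mem_preimage, Set.mem_Ici, hcleq s hsIcc]; linarith [not_lt.1 h])
        · exact Or.inr (by simp only [Set.mem_preimage, Set.mem_Ici, hcleq s hsIcc]; linarith [not_lt.1 h])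
      exact absurd (csInf_le hZbdd hsZ) (not_le.2 hst)
    have ht₀pos : 0 < t₀ := by
      rcases ht₀Icc.1.lt_or_eq with h | h
      · exact h
      · exfalso
        have h0Icc : (0:ℝ) ∈ Icc (0:ℝ) u := left_mem_Icc.2 hu0
        rcases ht₀Z.2 with h' | h'
        · simp only [Set.mem_preimage, Set.mem_Ici, ← h, hcleq 0 h0Icc] at h'
          linarith
        · simp only [Set.mem_preimage, Set.mem_Ici, ← h, hcleq 0 h0Icc] at h'
          linarith
    have hEle : b t₀ - d t₀ ≤ 0 := by
      have hc : ContinuousAt (fun s => b s - d s) t₀ :=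
        ((hb t₀ ht₀Icc.1 ht₀T).continuousAt).sub ((hd t₀ ht₀Icc.1 ht₀T).continuousAt)
      refine le_of_tendsto (hc.continuousWithinAt : ContinuousWithinAt _ (Iio t₀) t₀) ?_
      have hpos : ∀ᶠ s in nhdsWithin t₀ (Iio t₀), (0:ℝ) < s :=
        eventually_nhdsWithin_of_eventually_nhds (eventually_gt_nhds ht₀pos)
      filter_upwards [hpos, self_mem_nhdsWithin] with s hs0 hst
      exact (hstrict s hs0.le hst).1.le
    have hFle : ρ t₀ - a t₀ ≤ 0 := by
      have hc : ContinuousAt (fun s => ρ s - a s) t₀ :=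
        ((hρ t₀ ht₀Icc.1 ht₀T).continuousAt).sub ((ha t₀ ht₀Icc.1 ht₀T).continuousAt)
      refine le_of_tendsto (hc.continuousWithinAt : ContinuousWithinAt _ (Iio t₀) t₀) ?_
      have hpos : ∀ᶠ s in nhdsWithin t₀ (Iio t₀), (0:ℝ) < s :=
        eventually_nhdsWithin_of_eventually_nhds (eventually_gt_nhds ht₀pos)
      filter_upwards [hpos, self_mem_nhdsWithin] with s hs0 hst
      exact (hstrict s hs0.le hst).2.le
    have hlet₀ : ∀ s ∈ Icc (0:ℝ) t₀, b s - d s ≤ 0 ∧ ρ s - a s ≤ 0 := by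
      intro s hs
      rcases hs.2.lt_or_eq with h | h
      · exact ⟨(hstrict s hs.1 h).1.le, (hstrict s hs.1 h).2.le⟩
      · rw [h]; exact ⟨hEle, hFle⟩
    have hkey := key t₀ ht₀Icc.1 ht₀T hlet₀
    rcases ht₀Z.2 with h | h
    · simp only [Set.mem_preimage, Set.mem_Ici, hcleq t₀ ht₀Icc] at h
      linarith [hkey.1]
    · simp only [Set.mem_preimage, Set.mem_Ici, hcleq t₀ ht₀Icc] at h
      linarith [hkey.2]
  exact ⟨by linarith [main.1], hρpos u hu0 huT, by linarith [main.2]⟩
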